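/- Let G be unweighted, P a piece with boundary vertices b_1,...,b_k sorted so that d(u,b_1) ≤ ... ≤ d(u,b_k) for a fixed u ∉ V(P), and let v ∈ V(P)\∂P. Let j be the largest index such that v ∉ B(u, d(u,b_j)). Then d_G(u,v) = d_G(u,b_j) + d_P(B(u, d_G(u,b_j)) ∩ V(P), v), where d_P(S,v) = min over y ∈ S of d_P(y,v). -/

import Mathlib

open scoped ENNReal

/-- Distance-query formula for the unweighted distance oracle: `G` is an unweighted
digraph with distances `dG` (valued in `ℕ∞`), `P` a piece with vertex set `VP`,
boundary vertices `b 0, …, b (k−1)` (sorted nondecreasingly by distance from `u`),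
and internal distances `dP`; `u ∉ VP`, `v ∈ VP \ ∂P`.  The hypotheses record that
`dP` is an (unweighted) graph metric on `P` (triangle inequality, positivity on
distinct vertices, and existence of intermediate vertices on shortest paths) and
that distances from `u` into the piece decompose through the boundary.  If `j` is
the largest index with `v ∉ B(u, dG u (b j))`, then
`dG u v = dG u (b j) + dP(B(u, dG u (b j)) ∩ VP, v)`, where the last term is the
minimum over `y` in the ball-piece intersection of `dP y v`. -/
theorem stmt_13 {V : Type*} (VP : Set V) (k : ℕ) (hk : 0 < k) (b : Fin k → V)
    (dG dP : V → V → ℕ∞) (u v : V)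
    (hu : u ∉ VP) (hv : v ∈ VP) (hv' : ∀ i, v ≠ b i)
    (hbVP : ∀ i, b i ∈ VP)
    (hsort : Monotone fun i => dG u (b i))
    (hdec : ∀ x ∈ VP, dG u x = ⨅ i : Fin k, (dG u (b i) + dP (b i) x))
    (htri : ∀ x y z, dP x z ≤ dP x y + dP y z)
    (hpos : ∀ x y : V, x ≠ y → 1 ≤ dP x y)
    (hmid : ∀ x ∈ VP, ∀ y ∈ VP, dP x y ≠ ⊤ →
      ∀ q ≤ dP x y, ∃ z ∈ VP, dP x z = q ∧ dP z y = dP x y - q)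
    (j : Fin k)
    (hj1 : dG u (b j) < dG u v)
    (hj2 : ∀ i, dG u (b i) < dG u v → i ≤ j) :
    dG u v = dG u (b j) + ⨅ y ∈ {x ∈ VP | dG u x ≤ dG u (b j)}, dP y v := by

  have : Nonempty (Fin k) := Fin.pos_iff_nonempty.mp hk
  set D := dG u (b j) with hDdef
  set S := {x ∈ VP | dG u x ≤ D} with hSdef
  have hDtop : D ≠ ⊤ := (lt_of_lt_of_le hj1 le_top).ne
  -- Key: for any y in S, dG u v ≤ D + dP y v
  have key : ∀ y ∈ S, dG u v ≤ D + dP y v := by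
    rintro y ⟨hyVP, hyD⟩
    have h1 : dG u v ≤ dG u y + dP y v := by
      obtain ⟨i₁, hi₁⟩ := ciInf_mem (fun i : Fin k => dG u (b i) + dP (b i) y)
      rw [hdec v hv, hdec y hyVP, ← hi₁]
      calc ⨅ i : Fin k, (dG u (b i) + dP (b i) v) ≤ dG u (b i₁) + dP (b i₁) v :=
            iInf_le _ i₁
        _ ≤ dG u (b i₁) + (dP (b i₁) y + dP y v) := add_le_add_right (htri _ y _) _
        _ = dG u (b i₁) + dP (b i₁) y + dP y v := (add_assoc _ _ _).symm
    exact h1.trans (add_le_add_left hyD _)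
  refine le_antisymm ?_ ?_
  · -- ≤ direction
    rcases Set.eq_empty_or_nonempty S with hSe | hSne
    · rw [hSe]
      simp only [Set.mem_empty_iff_false, iInf_false, iInf_top, add_top]
      exact le_top
    · have himg : ((fun y => dP y v) '' S).Nonempty := hSne.image _
      have hmem := csInf_mem himg
      obtain ⟨y₀, hy₀S, hy₀⟩ := hmem
      have hinf : (⨅ y ∈ S, dP y v) = sInf ((fun y => dP y v) '' S) :=
        sInf_image.symm
      rw [hinf, ← hy₀]
      exact key y₀ hy₀S
  · -- ≥ direction
    rcases eq_or_ne (dG u v) ⊤ with htop | hfin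
    · rw [htop]; exact le_top
    obtain ⟨i₀, hi₀⟩ := ciInf_mem (fun i : Fin k => dG u (b i) + dP (b i) v)
    have hval : dG u (b i₀) + dP (b i₀) v = dG u v := by rw [hdec v hv]; exact hi₀
    have hatop : dG u (b i₀) ≠ ⊤ := by
      intro h; exact hfin (by rw [← hval, h, top_add])
    have hi₀j : i₀ ≤ j := by
      by_contra h
      have h2 : dG u v ≤ dG u (b i₀) := by
        by_contra h3
        exact h (hj2 i₀ (lt_of_not_ge h3))
      have h4 : dG u (b i₀) + 1 ≤ dG u (b i₀) + dP (b i₀) v :=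
        add_le_add_right (hpos _ _ (Ne.symm (hv' i₀))) _
      rw [hval] at h4
      have h5 : dG u (b i₀) + 1 ≤ dG u (b i₀) := h4.trans h2
      have h6 : dG u (b i₀) < dG u (b i₀) := (ENat.add_one_le_iff hatop).mp h5
      exact absurd h6 (lt_irrefl _)
    have haD : dG u (b i₀) ≤ D := hsort hi₀j
    have hPtop : dP (b i₀) v ≠ ⊤ := by
      intro h; exact hfin (by rw [← hval, h, add_top])
    set q := D - dG u (b i₀) with hq
    have hqle : q ≤ dP (b i₀) v := by
      rw [hq, tsub_le_iff_left, hval]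
      exact hj1.le
    obtain ⟨z, hzVP, hz1, hz2⟩ := hmid (b i₀) (hbVP i₀) v hv hPtop q hqle
    have haq : dG u (b i₀) + q = D := add_tsub_cancel_of_le haD
    have hzS : z ∈ S := by
      refine ⟨hzVP, ?_⟩
      calc dG u z ≤ dG u (b i₀) + dP (b i₀) z := by
            rw [hdec z hzVP]; exact iInf_le _ i₀
        _ = D := by rw [hz1, haq]
    have hdv : D + dP z v = dG u v := by
      rw [hz2, ← hval, ← haq]
      rw [add_assoc, add_tsub_cancel_of_le hqle]
    calc D + ⨅ y ∈ S, dP y v ≤ D + dP z v :=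
          add_le_add_right (iInf₂_le z hzS) _
      _ = dG u v := hdv
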